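/- Let p ∈ ℤ, let q ≥ 1 be an integer, let κ ≥ 2 be even and K = κq. Let V ∈ ℝ^{B^K} satisfy (F_K V)_j = 0 for every j ∈ B^K not divisible by q. Then the discrete free flow at time 2πp/q commutes with multiplication by V: for every U ∈ ℂ^{B^K}, e^{2πi(p/q)Δ^K}((V_kU_k)_k) = (V_k·(e^{2πi(p/q)Δ^K}U)_k)_k. -/

import Mathlib

/-- The index set `B^K = {−K/2, …, K/2−1}` (for `K` even). -/
noncomputable def BK (K : ℕ) : Finset ℤ := Finset.Icc (-((K : ℤ) / 2)) ((K : ℤ) / 2 - 1)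

/-- The discrete Fourier transform `(F_K U)_j = (1/K) Σ_{k∈B^K} e^{−2πijk/K} U_k`. -/
noncomputable def dft (K : ℕ) (U : ℤ → ℂ) (j : ℤ) : ℂ :=
  (1 / (K : ℂ)) * ∑ k ∈ BK K,
    Complex.exp (-(2 * (Real.pi : ℂ) * Complex.I * (j : ℂ) * (k : ℂ)) / (K : ℂ)) * U k

/-- The inverse discrete Fourier transform `(F_K⁻¹ W)_k = Σ_{j∈B^K} e^{2πijk/K} W_j`. -/
noncomputable def idft (K : ℕ) (W : ℤ → ℂ) (k : ℤ) : ℂ :=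
  ∑ j ∈ BK K,
    Complex.exp ((2 * (Real.pi : ℂ) * Complex.I * (j : ℂ) * (k : ℂ)) / (K : ℂ)) * W j

/-- The discrete `ℓ²` norm: `‖U‖_{ℓ²}² = (2π/K) Σ_{k∈B^K} |U_k|²`. -/
noncomputable def l2normK (K : ℕ) (U : ℤ → ℂ) : ℝ :=
  Real.sqrt ((2 * Real.pi / K) * ∑ k ∈ BK K, ‖U k‖ ^ 2)

/-- The discrete `h¹` norm: `‖U‖_{h¹}² = (2π/K) Σ_{k∈B^K} |(U_{k+1}−U_k)/δx|²`
with `δx = 2π/K`. -/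
noncomputable def h1normK (K : ℕ) (U : ℤ → ℂ) : ℝ :=
  Real.sqrt ((2 * Real.pi / K) *
    ∑ k ∈ BK K, ‖(U (k + 1) - U k) / ((2 * Real.pi / K : ℝ) : ℂ)‖ ^ 2)

/-- The discrete kinetic energy `T^K(W) = (1/K) Σ_{j∈B^K} j²|W_j|²`. -/
noncomputable def tK (K : ℕ) (W : ℤ → ℂ) : ℝ :=
  (1 / (K : ℝ)) * ∑ j ∈ BK K, (j : ℝ) ^ 2 * ‖W j‖ ^ 2

/-- The discrete free Schrödinger flow `e^{itΔ^K}U = F_K⁻¹(j ↦ e^{−itj²}(F_K U)_j)`. -/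
noncomputable def freeFlowK (K : ℕ) (t : ℝ) (U : ℤ → ℂ) : ℤ → ℂ :=
  idft K (fun j => Complex.exp (-(Complex.I * (t : ℂ)) * (j : ℂ) ^ 2) * dft K U j)

namespace Stmt16Aux

open Finset

/-- The exponential character `a ↦ e^{2πia/K}`. -/
noncomputable def c (K : ℕ) (a : ℤ) : ℂ :=
  Complex.exp (2 * (Real.pi : ℂ) * Complex.I * (a : ℂ) / (K : ℂ))

lemma c_add (K : ℕ) (a b : ℤ) : c K (a + b) = c K a * c K b := by
  rw [c, c, c, ← Complex.exp_add]
  congr 1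
  push_cast
  ring

lemma c_add_K_mul (K : ℕ) (hK : 0 < K) (a b : ℤ) : c K (a + K * b) = c K a := by
  rw [c_add]
  have h1 : c K ((K : ℤ) * b) = 1 := by
    rw [c]
    have hKc : (K : ℂ) ≠ 0 := by exact_mod_cast hK.ne'
    have h2 : 2 * (Real.pi : ℂ) * Complex.I * ((((K : ℤ) * b : ℤ)) : ℂ) / (K : ℂ)
        = (b : ℂ) * (2 * (Real.pi : ℂ) * Complex.I) := by
      push_cast
      field_simp
    rw [h2, Complex.exp_int_mul_two_pi_mul_I]
  rw [h1, mul_one]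

lemma sum_shift_one (K : ℕ) (hK2 : 2 * ((K : ℤ) / 2) = K) (hK : 0 < K)
    (f : ℤ → ℂ) (hf : ∀ j, f (j + K) = f j) :
    ∑ j ∈ BK K, f (j + 1) = ∑ j ∈ BK K, f j := by
  set M : ℤ := (K : ℤ) / 2 with hM
  have hM1 : 1 ≤ M := by omega
  have h1 : ∑ j ∈ BK K, f (j + 1) = ∑ j ∈ Finset.Icc (-M + 1) (M - 1 + 1), f j := by
    rw [BK, ← Finset.map_add_right_Icc _ _ (1 : ℤ), Finset.sum_map]
    rfl
  rw [h1]
  have e1 : Finset.Icc (-M + 1) (M - 1 + 1) = insert M (Finset.Icc (-M + 1) (M - 1)) := by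
    ext x; simp only [Finset.mem_Icc, Finset.mem_insert]; omega
  have e2 : (BK K) = insert (-M) (Finset.Icc (-M + 1) (M - 1)) := by
    rw [BK]; ext x; simp only [Finset.mem_Icc, Finset.mem_insert]; omega
  rw [e1, e2, Finset.sum_insert (by simp only [Finset.mem_Icc]; omega),
    Finset.sum_insert (by simp only [Finset.mem_Icc]; omega)]
  have h3 : f M = f (-M) := by
    have h4 := hf (-M)
    rw [show -M + (K : ℤ) = M by omega] at h4
    exact h4
  rw [h3]

lemma sum_shift (K : ℕ) (hK2 : 2 * ((K : ℤ) / 2) = K) (hK : 0 < K)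
    (f : ℤ → ℂ) (hf : ∀ j, f (j + K) = f j) (a : ℤ) :
    ∑ j ∈ BK K, f (j + a) = ∑ j ∈ BK K, f j := by
  induction a using Int.induction_on with
  | zero => simp
  | succ n ih =>
      have h1 := sum_shift_one K hK2 hK (fun j => f (j + n)) (fun j => by
        simpa [add_right_comm] using hf (j + n))
      have h2 : ∑ j ∈ BK K, f (j + ((n : ℤ) + 1)) = ∑ j ∈ BK K, f (j + 1 + n) := by
        apply Finset.sum_congr rfl
        intro j _
        congr 1
        ring
      rw [h2, h1, ih]
  | pred n ih =>
      have h1 := sum_shift_one K hK2 hK (fun j => f (j + (-(n : ℤ) - 1))) (fun j => by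
        simpa [add_right_comm] using hf (j + (-(n : ℤ) - 1)))
      have h2 : ∑ j ∈ BK K, f (j + (-(n : ℤ) - 1)) = ∑ j ∈ BK K, f (j + -(n : ℤ)) := by
        rw [← h1]
        apply Finset.sum_congr rfl
        intro j _
        congr 1
        ring
      rw [h2, ih]

lemma card_BK (K : ℕ) (hK2 : 2 * ((K : ℤ) / 2) = K) : (BK K).card = K := by
  rw [BK, Int.card_Icc]
  omega

lemma orth (K : ℕ) (hK2 : 2 * ((K : ℤ) / 2) = K) (hK : 0 < K)
    {k m : ℤ} (hk : k ∈ BK K) (hm : m ∈ BK K) :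
    ∑ j ∈ BK K, c K (j * (k - m)) = if k = m then (K : ℂ) else 0 := by
  set M : ℤ := (K : ℤ) / 2 with hMdef
  have hkm : k ∈ Finset.Icc (-M) (M - 1) := hk
  have hmm : m ∈ Finset.Icc (-M) (M - 1) := hm
  simp only [Finset.mem_Icc] at hkm hmm
  set d : ℤ := k - m with hd
  set r : ℂ := Complex.exp (2 * (Real.pi : ℂ) * Complex.I * (d : ℂ) / (K : ℂ)) with hr
  have hr0 : r ≠ 0 := Complex.exp_ne_zero _
  have hcr : ∀ j : ℤ, c K (j * d) = r ^ j := by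
    intro j
    rw [hr, ← Complex.exp_int_mul, c]
    congr 1
    push_cast
    ring
  by_cases hkm' : k = m
  · subst hkm'
    simp only [if_pos rfl]
    have h5 : ∀ j ∈ BK K, c K (j * (k - k)) = 1 := by
      intro j _
      simp [c]
    rw [Finset.sum_congr rfl h5, Finset.sum_const, card_BK K hK2]
    simp
  · rw [if_neg hkm']
    have hd0 : d ≠ 0 := sub_ne_zero.mpr hkm'
    have hdlt : |d| < (K : ℤ) := by
      rw [abs_lt]; omega
    have hKc : (K : ℂ) ≠ 0 := by exact_mod_cast hK.ne'
    have hr1 : r ≠ 1 := by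
      intro h
      rw [hr, Complex.exp_eq_one_iff] at h
      obtain ⟨n, hn⟩ := h
      have hpi : (2 : ℂ) * (Real.pi : ℂ) * Complex.I ≠ 0 := by
        simp [Real.pi_ne_zero, Complex.I_ne_zero]
      have hdc : (d : ℂ) = (n : ℂ) * (K : ℂ) := by
        field_simp at hn
        have h7 : (2 : ℂ) * (Real.pi : ℂ) * Complex.I * (d : ℂ)
            = 2 * (Real.pi : ℂ) * Complex.I * ((n : ℂ) * (K : ℂ)) := by
          linear_combination (2 * (Real.pi : ℂ) * Complex.I) * hn
        exact mul_left_cancel₀ hpi h7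
      have hdz : d = n * K := by exact_mod_cast hdc
      have h8 : d = 0 := Int.eq_zero_of_abs_lt_dvd ⟨n, by linarith [hdz]⟩ hdlt
      exact hd0 h8
    have hrK : r ^ (K : ℕ) = 1 := by
      rw [hr, ← Complex.exp_nat_mul]
      have h9 : (K : ℂ) * (2 * (Real.pi : ℂ) * Complex.I * (d : ℂ) / (K : ℂ))
          = (d : ℂ) * (2 * (Real.pi : ℂ) * Complex.I) := by
        field_simp
      rw [h9, Complex.exp_int_mul_two_pi_mul_I]
    have hre : ∑ j ∈ BK K, c K (j * d) = ∑ i ∈ Finset.range K, r ^ (-M) * r ^ (i : ℕ) := by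
      refine Finset.sum_nbij' (i := fun j => (j + M).toNat) (j := fun i => (i : ℤ) - M)
        ?_ ?_ ?_ ?_ ?_
      · intro a ha
        have h10 := Finset.mem_Icc.mp ha
        simp only [Finset.mem_range]
        omega
      · intro a ha
        simp only [Finset.mem_range] at ha
        rw [BK]
        simp only [Finset.mem_Icc]
        omega
      · intro a ha
        have h10 := Finset.mem_Icc.mp ha
        show ((a + M).toNat : ℤ) - M = a
        omega
      · intro a ha
        simp only [Finset.mem_range] at ha
        show ((a : ℤ) - M + M).toNat = a
        omega
      · intro a ha
        have h10 := Finset.mem_Icc.mp ha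
        rw [hcr, ← zpow_natCast r ((a + M).toNat), ← zpow_add₀ hr0]
        congr 1
        omega
    rw [hre, ← Finset.mul_sum, geom_sum_eq hr1, hrK]
    simp

/-- DFT inversion at points of `BK K`. -/
lemma inversion (K : ℕ) (hK2 : 2 * ((K : ℤ) / 2) = K) (hK : 0 < K)
    (W : ℤ → ℂ) {k : ℤ} (hk : k ∈ BK K) :
    ∑ n ∈ BK K, c K (n * k) * dft K W n = W k := by
  have hKc : (K : ℂ) ≠ 0 := by exact_mod_cast hK.ne'
  have key : ∀ n m : ℤ,
      c K (n * k) * Complex.exp (-(2 * (Real.pi : ℂ) * Complex.I * (n : ℂ) * (m : ℂ)) / (K : ℂ))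
        = c K (n * (k - m)) := by
    intro n m
    rw [c, c, ← Complex.exp_add]
    congr 1
    push_cast
    ring
  calc ∑ n ∈ BK K, c K (n * k) * dft K W n
      = ∑ n ∈ BK K, ∑ m ∈ BK K, (1 / (K : ℂ)) * (c K (n * (k - m)) * W m) := by
        refine Finset.sum_congr rfl fun n _ => ?_
        rw [dft]
        rw [Finset.mul_sum, Finset.mul_sum]
        refine Finset.sum_congr rfl fun m _ => ?_
        rw [← key n m]
        ring
    _ = ∑ m ∈ BK K, (1 / (K : ℂ)) * ((∑ n ∈ BK K, c K (n * (k - m))) * W m) := by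
        rw [Finset.sum_comm]
        refine Finset.sum_congr rfl fun m _ => ?_
        rw [Finset.sum_mul, Finset.mul_sum]
    _ = ∑ m ∈ BK K, (if k = m then W m else 0) := by
        refine Finset.sum_congr rfl fun m hm => ?_
        rw [orth K hK2 hK hk hm]
        by_cases h : k = m
        · rw [if_pos h, if_pos h]
          field_simp
        · rw [if_neg h, if_neg h]
          ring
    _ = W k := by
        rw [Finset.sum_ite_eq (BK K) k W, if_pos hk]

/-- Invariance of the phase `e^{-itj²}` (at `t = 2πp/q`) under shifting `j` by a
multiple of `q`. -/
lemma E_shift (p : ℤ) (q : ℕ) (hq : 0 < q) (n j : ℤ) (hn : (q : ℤ) ∣ n) :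
    Complex.exp (-(Complex.I * ((2 * Real.pi * (p : ℝ) / (q : ℝ) : ℝ) : ℂ)) * (((j + n : ℤ)) : ℂ) ^ 2)
      = Complex.exp (-(Complex.I * ((2 * Real.pi * (p : ℝ) / (q : ℝ) : ℝ) : ℂ)) * ((j : ℤ) : ℂ) ^ 2) := by
  obtain ⟨l, rfl⟩ := hn
  have hqc : (q : ℂ) ≠ 0 := by exact_mod_cast hq.ne'
  have h1 : -(Complex.I * ((2 * Real.pi * (p : ℝ) / (q : ℝ) : ℝ) : ℂ)) * (((j + (q : ℤ) * l : ℤ)) : ℂ) ^ 2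
      = -(Complex.I * ((2 * Real.pi * (p : ℝ) / (q : ℝ) : ℝ) : ℂ)) * ((j : ℤ) : ℂ) ^ 2
        + ((-(p * (2 * j * l + (q : ℤ) * l ^ 2)) : ℤ) : ℂ) * (2 * (Real.pi : ℂ) * Complex.I) := by
    push_cast
    field_simp
    ring
  rw [h1, Complex.exp_add, Complex.exp_int_mul_two_pi_mul_I, mul_one]

/-- The free flow as a kernel sum. -/
lemma flow_eq (K : ℕ) (t : ℝ) (W : ℤ → ℂ) (k : ℤ) :
    freeFlowK K t W k = (1 / (K : ℂ)) * ∑ m ∈ BK K,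
      (∑ j ∈ BK K, Complex.exp (-(Complex.I * (t : ℂ)) * (j : ℂ) ^ 2) * c K (j * (k - m))) * W m := by
  rw [freeFlowK, idft]
  simp only [dft]
  rw [Finset.mul_sum]
  calc ∑ j ∈ BK K,
        Complex.exp (2 * (Real.pi : ℂ) * Complex.I * (j : ℂ) * (k : ℂ) / (K : ℂ)) *
          (Complex.exp (-(Complex.I * (t : ℂ)) * (j : ℂ) ^ 2) *
            ((1 / (K : ℂ)) * ∑ m ∈ BK K,
              Complex.exp (-(2 * (Real.pi : ℂ) * Complex.I * (j : ℂ) * (m : ℂ)) / (K : ℂ)) * W m))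
      = ∑ j ∈ BK K, ∑ m ∈ BK K, (1 / (K : ℂ)) *
          (Complex.exp (-(Complex.I * (t : ℂ)) * (j : ℂ) ^ 2) * c K (j * (k - m)) * W m) := by
        refine Finset.sum_congr rfl fun j _ => ?_
        simp only [Finset.mul_sum]
        refine Finset.sum_congr rfl fun m _ => ?_
        have key : Complex.exp (2 * (Real.pi : ℂ) * Complex.I * (j : ℂ) * (k : ℂ) / (K : ℂ)) *
            Complex.exp (-(2 * (Real.pi : ℂ) * Complex.I * (j : ℂ) * (m : ℂ)) / (K : ℂ))
            = c K (j * (k - m)) := by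
          rw [c, ← Complex.exp_add]
          congr 1
          push_cast
          ring
        rw [← key]
        ring
    _ = ∑ m ∈ BK K, (1 / (K : ℂ)) *
          ((∑ j ∈ BK K, Complex.exp (-(Complex.I * (t : ℂ)) * (j : ℂ) ^ 2) * c K (j * (k - m))) * W m) := by
        rw [Finset.sum_comm]
        refine Finset.sum_congr rfl fun m _ => ?_
        rw [Finset.sum_mul, Finset.mul_sum]

end Stmt16Aux

/-- For `K = κq` (`κ ≥ 2` even) and a real potential `V ∈ ℝ^{B^K}` whose
discrete Fourier coefficients `(F_K V)_j` vanish for `j` not divisible by `q`, the discrete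
free flow at time `2πp/q` commutes with multiplication by `V`: for every `U ∈ ℂ^{B^K}` and
every `k ∈ B^K`,
`(e^{2πi(p/q)Δ^K}((V_mU_m)_m))_k = V_k·(e^{2πi(p/q)Δ^K}U)_k`. -/
theorem stmt16 (p : ℤ) (q : ℕ) (hq : 1 ≤ q) (κ : ℕ) (hκe : Even κ) (hκ2 : 2 ≤ κ)
    (K : ℕ) (hK : K = κ * q)
    (V : ℤ → ℝ) (hV_per : ∀ j : ℤ, V (j + K) = V j)
    (hVq : ∀ j ∈ BK K, ¬ ((q : ℤ) ∣ j) → dft K (fun k => ((V k : ℝ) : ℂ)) j = 0) :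
    ∀ U : ℤ → ℂ, (∀ j : ℤ, U (j + K) = U j) →
      ∀ k ∈ BK K,
        freeFlowK K (2 * Real.pi * (p : ℝ) / (q : ℝ)) (fun m => ((V m : ℝ) : ℂ) * U m) k =
          ((V k : ℝ) : ℂ) * freeFlowK K (2 * Real.pi * (p : ℝ) / (q : ℝ)) U k := by
  intro U hU k hk
  open Stmt16Aux in
  have hq0 : 0 < q := hq
  have hKpos : 0 < K := by
    rw [hK]; positivity
  have hKeven : ∃ s : ℕ, K = 2 * s := by
    obtain ⟨r, hr⟩ := hκe
    exact ⟨r * q, by rw [hK, hr]; ring⟩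
  have hK2 : 2 * ((K : ℤ) / 2) = K := by
    obtain ⟨s, hs⟩ := hKeven
    omega
  have hqK : (q : ℤ) ∣ (K : ℤ) := ⟨(κ : ℤ), by push_cast [hK]; ring⟩
  set t : ℝ := 2 * Real.pi * (p : ℝ) / (q : ℝ) with ht
  set E : ℤ → ℂ := fun j => Complex.exp (-(Complex.I * (t : ℂ)) * (j : ℂ) ^ 2) with hE
  set Vc : ℤ → ℂ := fun m => ((V m : ℝ) : ℂ) with hVc
  set Wh : ℤ → ℂ := dft K Vc with hWh
  -- E is invariant under shifts by multiples of q
  have hEsh : ∀ n j : ℤ, (q : ℤ) ∣ n → E (j + n) = E j := by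
    intro n j hn
    exact Stmt16Aux.E_shift p q hq0 n j hn
  -- key commutation identity
  have step2 : ∀ m n : ℤ, m ∈ BK K → (q : ℤ) ∣ n →
      (∑ j ∈ BK K, E j * Stmt16Aux.c K (j * (k - m))) * Stmt16Aux.c K (n * m)
        = Stmt16Aux.c K (n * k) * (∑ j ∈ BK K, E j * Stmt16Aux.c K (j * (k - m))) := by
    intro m n hm hn
    set g : ℤ → ℂ := fun j => E j * Stmt16Aux.c K (j * (k - m)) with hg
    have hgper : ∀ j, g (j + K) = g j := by
      intro j
      show E (j + K) * Stmt16Aux.c K ((j + K) * (k - m)) = E j * Stmt16Aux.c K (j * (k - m))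
      rw [hEsh (K : ℤ) j hqK,
        show ((j + (K : ℤ)) * (k - m)) = j * (k - m) + (K : ℤ) * (k - m) by ring,
        Stmt16Aux.c_add_K_mul K hKpos]
    have hshift : ∑ j ∈ BK K, g (j + n) = ∑ j ∈ BK K, g j :=
      Stmt16Aux.sum_shift K hK2 hKpos g hgper n
    have hexp : ∑ j ∈ BK K, g (j + n)
        = Stmt16Aux.c K (n * (k - m)) * ∑ j ∈ BK K, g j := by
      rw [Finset.mul_sum]
      refine Finset.sum_congr rfl fun j _ => ?_
      show E (j + n) * Stmt16Aux.c K ((j + n) * (k - m))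
          = Stmt16Aux.c K (n * (k - m)) * (E j * Stmt16Aux.c K (j * (k - m)))
      rw [hEsh n j hn,
        show ((j + n) * (k - m)) = j * (k - m) + n * (k - m) by ring,
        Stmt16Aux.c_add]
      ring
    have hfix : (∑ j ∈ BK K, E j * Stmt16Aux.c K (j * (k - m)))
        = Stmt16Aux.c K (n * (k - m)) * ∑ j ∈ BK K, E j * Stmt16Aux.c K (j * (k - m)) :=
      calc (∑ j ∈ BK K, E j * Stmt16Aux.c K (j * (k - m)))
          = ∑ j ∈ BK K, g (j + n) := hshift.symm
        _ = Stmt16Aux.c K (n * (k - m)) * ∑ j ∈ BK K, g j := hexp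
        _ = Stmt16Aux.c K (n * (k - m)) * ∑ j ∈ BK K, E j * Stmt16Aux.c K (j * (k - m)) := rfl
    have hcc : Stmt16Aux.c K (n * (k - m)) * Stmt16Aux.c K (n * m) = Stmt16Aux.c K (n * k) := by
      rw [← Stmt16Aux.c_add]
      congr 1
      ring
    conv_lhs => rw [hfix]
    linear_combination (∑ j ∈ BK K, E j * Stmt16Aux.c K (j * (k - m))) * hcc
  -- Fourier inversion for V
  have hVinv : ∀ x : ℤ, x ∈ BK K →
      Vc x = ∑ n ∈ BK K, Stmt16Aux.c K (n * x) * Wh n := by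
    intro x hx
    exact (Stmt16Aux.inversion K hK2 hKpos Vc hx).symm
  -- divisibility from the Fourier support hypothesis
  have hdvd : ∀ n ∈ BK K, Wh n ≠ 0 → (q : ℤ) ∣ n := by
    intro n hn hWn
    by_contra h
    exact hWn (hVq n hn h)
  -- assemble
  rw [Stmt16Aux.flow_eq, Stmt16Aux.flow_eq]
  have hVk : ((V k : ℝ) : ℂ) = ∑ n ∈ BK K, Stmt16Aux.c K (n * k) * Wh n := hVinv k hk
  rw [hVk]
  calc (1 / (K : ℂ)) * ∑ m ∈ BK K, (∑ j ∈ BK K, E j * Stmt16Aux.c K (j * (k - m))) * (Vc m * U m)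
      = ∑ m ∈ BK K, ∑ n ∈ BK K, (1 / (K : ℂ)) *
          ((∑ j ∈ BK K, E j * Stmt16Aux.c K (j * (k - m)))
            * (Stmt16Aux.c K (n * m) * (Wh n * U m))) := by
        rw [Finset.mul_sum]
        refine Finset.sum_congr rfl fun m hm => ?_
        rw [hVinv m hm]
        generalize (∑ j ∈ BK K, E j * Stmt16Aux.c K (j * (k - m))) = A
        simp only [Finset.mul_sum, Finset.sum_mul]
        refine Finset.sum_congr rfl fun n _ => ?_
        ring
    _ = ∑ m ∈ BK K, ∑ n ∈ BK K, (1 / (K : ℂ)) *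
          (Stmt16Aux.c K (n * k) *
            ((∑ j ∈ BK K, E j * Stmt16Aux.c K (j * (k - m))) * (Wh n * U m))) := by
        refine Finset.sum_congr rfl fun m hm => Finset.sum_congr rfl fun n hn => ?_
        by_cases h : Wh n = 0
        · rw [h]; ring
        · have hqn : (q : ℤ) ∣ n := hdvd n hn h
          have h2 := step2 m n hm hqn
          linear_combination (1 / (K : ℂ)) * (Wh n * U m) * h2
    _ = (∑ n ∈ BK K, Stmt16Aux.c K (n * k) * Wh n) *
          ((1 / (K : ℂ)) * ∑ m ∈ BK K, (∑ j ∈ BK K, E j * Stmt16Aux.c K (j * (k - m))) * U m) := by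
        rw [Finset.sum_comm, Finset.sum_mul]
        refine Finset.sum_congr rfl fun n hn => ?_
        simp only [Finset.mul_sum, Finset.sum_mul]
        refine Finset.sum_congr rfl fun m hm => ?_
        refine Finset.sum_congr rfl fun j hj => ?_
        ring
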